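/- Let D be a self-adjoint operator on H and a ∈ B(H). Then a is strongly D-differentiable (i.e., t ↦ α_t(a) is norm differentiable at 0) if and only if a is weakly D-differentiable and the map t ↦ α_t(wD(a)) is norm continuous. -/

import Mathlib

open Complex Filter Topology MeasureTheory
open scoped Topology

local notation "⟪" x ", " y "⟫" => @inner ℂ _ _ x y

variable {H : Type*} [NormedAddCommGroup H] [InnerProductSpace ℂ H] [CompleteSpace H]

/-- `b` is the bounded operator implementing the commutator form
`(ξ, η) ↦ ⟨aξ, Dη⟩ − ⟨aDξ, η⟩` on `dom D × dom D`; i.e. `a` is weakly `D`-differentiable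
with derivative `wD(a) = b`. -/
def IsWeakDeriv (D : H →ₗ.[ℂ] H) (a b : H →L[ℂ] H) : Prop :=
  ∀ ξ η : D.domain, ⟪b (ξ : H), (η : H)⟫ = ⟪a (ξ : H), D η⟫ - ⟪a (D ξ), (η : H)⟫

/-- `conjAd U t a = U t ∘ a ∘ U (−t)`, i.e. `α_t(a) = e^{itD} a e^{-itD}`. -/
noncomputable def conjAd (U : ℝ → H →L[ℂ] H) (t : ℝ) (a : H →L[ℂ] H) : H →L[ℂ] H :=
  (U t).comp (a.comp (U (-t)))

/-- `U` is the strongly continuous one-parameter unitary group `t ↦ e^{itD}`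
generated by the self-adjoint operator `D` (Stone's theorem characterization). -/
structure IsStoneGroupOf (D : H →ₗ.[ℂ] H) (U : ℝ → H →L[ℂ] H) : Prop where
  map_zero : U 0 = 1
  map_add : ∀ s t : ℝ, U (s + t) = (U s).comp (U t)
  isometry : ∀ (t : ℝ) (ξ : H), ‖U t ξ‖ = ‖ξ‖
  hasDerivAt : ∀ ξ : D.domain, HasDerivAt (fun t : ℝ => U t (ξ : H)) (Complex.I • D ξ) 0
  mem_domain : ∀ ξ v : H, HasDerivAt (fun t : ℝ => U t ξ) v 0 → ξ ∈ D.domain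

set_option linter.unusedSectionVars false

section StoneHelpSec

variable {H : Type*} [NormedAddCommGroup H] [InnerProductSpace ℂ H] [CompleteSpace H]

namespace StoneHelp

variable {D : H →ₗ.[ℂ] H} {U : ℝ → H →L[ℂ] H}

lemma U_add_apply (h : IsStoneGroupOf D U) (s t : ℝ) (x : H) :
    U (s + t) x = U s (U t x) := by
  rw [h.map_add s t]; rfl

lemma U_U_neg (h : IsStoneGroupOf D U) (t : ℝ) (x : H) : U t (U (-t) x) = x := by
  rw [← U_add_apply h t (-t) x, add_neg_cancel, h.map_zero, ContinuousLinearMap.one_apply]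

lemma U_neg_U (h : IsStoneGroupOf D U) (t : ℝ) (x : H) : U (-t) (U t x) = x := by
  simpa using U_U_neg h (-t) x

lemma inner_U_U (h : IsStoneGroupOf D U) (t : ℝ) (x y : H) :
    ⟪U t x, U t y⟫ = ⟪x, y⟫ := by
  let f : H →ₗᵢ[ℂ] H := ⟨(U t : H →ₗ[ℂ] H), h.isometry t⟩
  exact f.inner_map_map x y

lemma inner_U (h : IsStoneGroupOf D U) (t : ℝ) (x y : H) :
    ⟪U t x, y⟫ = ⟪x, U (-t) y⟫ := by
  conv_lhs => rw [← U_U_neg h t y, inner_U_U h]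

lemma inner_U' (h : IsStoneGroupOf D U) (t : ℝ) (x y : H) :
    ⟪x, U t y⟫ = ⟪U (-t) x, y⟫ := by
  conv_lhs => rw [← U_U_neg h t x]
  exact inner_U_U h t _ _

/-- `U t` preserves the domain and commutes with `D`. -/
lemma mem_and_map (h : IsStoneGroupOf D U) (t : ℝ) (ξ : D.domain) :
    ∃ hm : U t (ξ : H) ∈ D.domain, D ⟨U t (ξ : H), hm⟩ = U t (D ξ) := by
  have hd0 := h.hasDerivAt ξ
  have hd1 : HasDerivAt (fun s : ℝ => U t (U s (ξ : H))) (U t (Complex.I • D ξ)) 0 :=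
    ((U t).restrictScalars ℝ).hasFDerivAt.comp_hasDerivAt 0 hd0
  have hfun : (fun s : ℝ => U t (U s (ξ : H))) = fun s : ℝ => U s (U t (ξ : H)) := by
    funext s
    rw [← U_add_apply h t s, ← U_add_apply h s t, add_comm]
  have hd2 : HasDerivAt (fun s : ℝ => U s (U t (ξ : H))) (Complex.I • U t (D ξ)) 0 := by
    rw [← hfun]; simpa using hd1
  have hm : U t (ξ : H) ∈ D.domain := h.mem_domain _ _ hd2
  refine ⟨hm, ?_⟩
  have hd3 := h.hasDerivAt ⟨U t (ξ : H), hm⟩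
  have := hd3.unique hd2
  have hI : (Complex.I : ℂ) ≠ 0 := Complex.I_ne_zero
  exact smul_right_injective H hI this

lemma hasDerivAt_U (h : IsStoneGroupOf D U) (ξ : D.domain) (t₀ : ℝ) :
    HasDerivAt (fun t : ℝ => U t (ξ : H)) (Complex.I • U t₀ (D ξ)) t₀ := by
  obtain ⟨hm, hDm⟩ := mem_and_map h t₀ ξ
  have hd2 : HasDerivAt (fun s : ℝ => U s (U t₀ (ξ : H))) (Complex.I • U t₀ (D ξ)) 0 := by
    have := h.hasDerivAt ⟨U t₀ (ξ : H), hm⟩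
    rwa [hDm] at this
  have hshift : HasDerivAt (fun t : ℝ => t - t₀) (1 : ℝ) t₀ := (hasDerivAt_id t₀).sub_const t₀
  have := HasDerivAt.scomp (x := t₀)
    (g₁ := fun s : ℝ => U s (U t₀ (ξ : H))) (h := fun t : ℝ => t - t₀)
    (by simpa using hd2) hshift
  simp only [one_smul] at this
  have hfun : ((fun s : ℝ => U s (U t₀ (ξ : H))) ∘ fun t => t - t₀)
      = fun t : ℝ => U t (ξ : H) := by
    funext s
    simp only [Function.comp]
    rw [← U_add_apply h (s - t₀) t₀, sub_add_cancel]
  rwa [hfun] at this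

lemma hasDerivAt_U_neg (h : IsStoneGroupOf D U) (ξ : D.domain) (t₀ : ℝ) :
    HasDerivAt (fun t : ℝ => U (-t) (ξ : H)) (-(Complex.I • U (-t₀) (D ξ))) t₀ := by
  have := HasDerivAt.scomp (x := t₀) (g₁ := fun s : ℝ => U s (ξ : H)) (h := fun t : ℝ => -t)
    (hasDerivAt_U h ξ (-t₀)) (hasDerivAt_neg t₀)
  simpa [Function.comp_def] using this

end StoneHelp

namespace StoneHelp

/-- `conjAd U t` as a continuous linear map on `B(H)`. -/
noncomputable def conjAdL (U : ℝ → H →L[ℂ] H) (t : ℝ) : (H →L[ℂ] H) →L[ℂ] (H →L[ℂ] H) :=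
  (ContinuousLinearMap.compL ℂ H H H (U t)).comp
    ((ContinuousLinearMap.compL ℂ H H H).flip (U (-t)))

lemma conjAdL_apply (U : ℝ → H →L[ℂ] H) (t : ℝ) (x : H →L[ℂ] H) :
    conjAdL U t x = conjAd U t x := rfl

lemma conjAd_apply (U : ℝ → H →L[ℂ] H) (t : ℝ) (a : H →L[ℂ] H) (ξ : H) :
    conjAd U t a ξ = U t (a (U (-t) ξ)) := rfl

variable {D : H →ₗ.[ℂ] H} {U : ℝ → H →L[ℂ] H}

lemma conjAd_zero (h : IsStoneGroupOf D U) (a : H →L[ℂ] H) : conjAd U 0 a = a := by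
  ext ξ; simp [conjAd_apply, h.map_zero]

lemma conjAd_add (h : IsStoneGroupOf D U) (s t : ℝ) (a : H →L[ℂ] H) :
    conjAd U (s + t) a = conjAd U s (conjAd U t a) := by
  ext ξ
  simp only [conjAd_apply]
  rw [← U_add_apply h s t, ← U_add_apply h (-t) (-s)]
  have : -t + -s = -(s + t) := by ring
  rw [this]

lemma conjAd_norm_le (h : IsStoneGroupOf D U) (t : ℝ) (x : H →L[ℂ] H) :
    ‖conjAd U t x‖ ≤ ‖x‖ := by
  refine ContinuousLinearMap.opNorm_le_bound _ (norm_nonneg x) fun ξ => ?_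
  rw [conjAd_apply, h.isometry]
  calc ‖x (U (-t) ξ)‖ ≤ ‖x‖ * ‖U (-t) ξ‖ := x.le_opNorm _
  _ = ‖x‖ * ‖ξ‖ := by rw [h.isometry]

lemma conjAd_conjAd_neg (h : IsStoneGroupOf D U) (t : ℝ) (x : H →L[ℂ] H) :
    conjAd U (-t) (conjAd U t x) = x := by
  rw [← conjAd_add h (-t) t x, neg_add_cancel, conjAd_zero h]

lemma conjAd_norm (h : IsStoneGroupOf D U) (t : ℝ) (x : H →L[ℂ] H) :
    ‖conjAd U t x‖ = ‖x‖ := by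
  refine le_antisymm (conjAd_norm_le h t x) ?_
  conv_lhs => rw [← conjAd_conjAd_neg h t x]
  exact conjAd_norm_le h (-t) _

lemma coeff_eq (h : IsStoneGroupOf D U) (a : H →L[ℂ] H) (ξ η : H) :
    (fun s : ℝ => ⟪η, conjAd U s a ξ⟫) = fun s : ℝ => ⟪U (-s) η, a (U (-s) ξ)⟫ := by
  funext s
  rw [conjAd_apply, inner_U' h]

lemma hasDerivAt_coeff (h : IsStoneGroupOf D U) (a : H →L[ℂ] H) (ξ η : D.domain) (s₀ : ℝ) :
    HasDerivAt (fun s : ℝ => ⟪(η : H), conjAd U s a (ξ : H)⟫)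
      (Complex.I * ⟪U (-s₀) (D η), a (U (-s₀) (ξ : H))⟫
        - Complex.I * ⟪U (-s₀) (η : H), a (U (-s₀) (D ξ))⟫) s₀ := by
  rw [coeff_eq h a]
  have hu := hasDerivAt_U_neg h η s₀
  have hv : HasDerivAt (fun s : ℝ => a (U (-s) (ξ : H)))
      (a (-(Complex.I • U (-s₀) (D ξ)))) s₀ :=
    (a.restrictScalars ℝ).hasFDerivAt.comp_hasDerivAt s₀ (hasDerivAt_U_neg h ξ s₀)
  have := HasDerivAt.inner ℂ hu hv
  convert this using 1
  · rfl
  simp only [map_neg, _root_.map_smul, inner_neg_left, inner_neg_right, inner_smul_left,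
    inner_smul_right, Complex.conj_I]
  ring

end StoneHelp

namespace StoneHelp

variable {D : H →ₗ.[ℂ] H} {U : ℝ → H →L[ℂ] H}

lemma backward (hD : IsSelfAdjoint D) (h : IsStoneGroupOf D U) (a b : H →L[ℂ] H)
    (hb : IsWeakDeriv D a b) (Cb : Continuous fun t : ℝ => conjAd U t b) :
    HasDerivAt (fun t : ℝ => conjAd U t a) (Complex.I • b) 0 := by
  have hdom : Dense (D.domain : Set H) := hD.dense_domain
  set f : ℝ → H →L[ℂ] H := (fun s => Complex.I • conjAd U s b) with hf
  have fcont : Continuous f := Cb.const_smul Complex.I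
  have hderiv : ∀ (ξ η : D.domain) (s : ℝ),
      HasDerivAt (fun s : ℝ => ⟪(η : H), conjAd U s a (ξ : H)⟫) ⟪(η : H), f s (ξ : H)⟫ s := by
    intro ξ η s
    obtain ⟨hmξ, hDξ⟩ := mem_and_map h (-s) ξ
    obtain ⟨hmη, hDη⟩ := mem_and_map h (-s) η
    have key := hb ⟨U (-s) (ξ : H), hmξ⟩ ⟨U (-s) (η : H), hmη⟩
    rw [hDξ, hDη] at key
    have key2 := congrArg (starRingEnd ℂ) key
    simp only [map_sub, inner_conj_symm] at key2
    have hdc := hasDerivAt_coeff h a ξ η s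
    convert hdc using 1
    simp only [hf, ContinuousLinearMap.smul_apply, inner_smul_right, conjAd_apply,
      inner_U' h]
    rw [key2]
    ring
  have key_eq : ∀ t : ℝ, conjAd U t a = a + ∫ s in (0:ℝ)..t, f s := by
    intro t
    have hGint : IntervalIntegrable f MeasureTheory.volume 0 t := fcont.intervalIntegrable 0 t
    have hpt : ∀ ξ : D.domain, conjAd U t a (ξ : H) = (a + ∫ s in (0:ℝ)..t, f s) (ξ : H) := by
      intro ξ
      refine hdom.eq_of_inner_right ℂ fun η' hη' => ?_
      obtain ⟨η, rfl⟩ : ∃ η : D.domain, (η : H) = η' := ⟨⟨η', hη'⟩, rfl⟩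
      have hint2 : IntervalIntegrable (fun s => f s (ξ : H)) MeasureTheory.volume 0 t :=
        (((ContinuousLinearMap.apply ℂ H (ξ : H)).continuous.comp fcont).intervalIntegrable 0 t)
      have hcont3 : Continuous fun s : ℝ => ⟪(η : H), f s (ξ : H)⟫ :=
        continuous_const.inner ((ContinuousLinearMap.apply ℂ H (ξ : H)).continuous.comp fcont)
      have hFTC := intervalIntegral.integral_eq_sub_of_hasDerivAt
        (f := fun s : ℝ => ⟪(η : H), conjAd U s a (ξ : H)⟫)
        (f' := fun s : ℝ => ⟪(η : H), f s (ξ : H)⟫)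
        (fun s _ => hderiv ξ η s) (hcont3.intervalIntegrable 0 t)
      have e1 := (innerSL ℂ (η : H)).intervalIntegral_comp_comm hint2
      have e2 := (ContinuousLinearMap.apply ℂ H (ξ : H)).intervalIntegral_comp_comm hGint
      simp only [innerSL_apply_apply, ContinuousLinearMap.apply_apply] at e1 e2
      simp only [conjAd_zero h] at hFTC
      simp only [ContinuousLinearMap.add_apply, inner_add_right]
      rw [← e2, ← e1, hFTC]
      ring
    have hcoe := Continuous.ext_on hdom (conjAd U t a).continuous
      (a + ∫ s in (0:ℝ)..t, f s).continuous (fun x hx => hpt ⟨x, hx⟩)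
    exact ContinuousLinearMap.coeFn_injective hcoe
  have hG : HasDerivAt (fun t : ℝ => ∫ s in (0:ℝ)..t, f s) (f 0) 0 :=
    (fcont.integral_hasStrictDerivAt 0 0).hasDerivAt
  have hG2 : HasDerivAt (fun t : ℝ => a + ∫ s in (0:ℝ)..t, f s) (f 0) 0 := hG.const_add a
  have hfun : (fun t : ℝ => conjAd U t a) = fun t => a + ∫ s in (0:ℝ)..t, f s := funext key_eq
  rw [hfun]
  convert hG2 using 1
  simp [hf, conjAd_zero h]

end StoneHelp

namespace StoneHelp

variable {D : H →ₗ.[ℂ] H} {U : ℝ → H →L[ℂ] H}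

lemma forward_weak (h : IsStoneGroupOf D U) (a d : H →L[ℂ] H)
    (hd : HasDerivAt (fun t : ℝ => conjAd U t a) d 0) :
    IsWeakDeriv D a (-(Complex.I • d)) := by
  intro ξ η
  have hT : HasDerivAt (fun t : ℝ => ⟪(η : H), conjAd U t a (ξ : H)⟫) ⟪(η : H), d (ξ : H)⟫ 0 := by
    have := ((((innerSL ℂ (η : H)).comp
      (ContinuousLinearMap.apply ℂ H (ξ : H))).restrictScalars ℝ).hasFDerivAt
        (x := conjAd U (0:ℝ) a)).comp_hasDerivAt 0 hd
    simpa [Function.comp_def] using this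
  have heq := hT.unique (hasDerivAt_coeff h a ξ η 0)
  simp only [neg_zero, h.map_zero, ContinuousLinearMap.one_apply] at heq
  have heq2 := congrArg (starRingEnd ℂ) heq
  simp only [map_sub, map_mul, Complex.conj_I, inner_conj_symm] at heq2
  simp only [ContinuousLinearMap.neg_apply, ContinuousLinearMap.smul_apply, inner_neg_left,
    inner_smul_left, Complex.conj_I, heq2]
  linear_combination (-(⟪a (ξ : H), (D η : H)⟫ - ⟪a (D ξ : H), (η : H)⟫)) * Complex.I_mul_I

lemma continuous_conjAd_of_tendsto (h : IsStoneGroupOf D U) (x : H →L[ℂ] H)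
    (h0 : Tendsto (fun t : ℝ => conjAd U t x) (𝓝 0) (𝓝 x)) :
    Continuous fun t : ℝ => conjAd U t x := by
  rw [continuous_iff_continuousAt]
  intro t₀
  have hsub : Tendsto (fun t : ℝ => t - t₀) (𝓝 t₀) (𝓝 0) := by
    simpa using (continuous_sub_right t₀).tendsto t₀
  have hcomp := ((conjAdL U t₀).continuous.tendsto x).comp (h0.comp hsub)
  have hfun : ((fun y => conjAdL U t₀ y) ∘ ((fun t : ℝ => conjAd U t x) ∘ fun t => t - t₀))
      = fun t : ℝ => conjAd U t x := by
    funext t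
    simp only [Function.comp, conjAdL_apply]
    rw [← conjAd_add h, show t₀ + (t - t₀) = t by ring]
  rw [ContinuousAt]
  rw [hfun] at hcomp
  exact hcomp

lemma forward_cont (h : IsStoneGroupOf D U) (a d : H →L[ℂ] H)
    (hd : HasDerivAt (fun t : ℝ => conjAd U t a) d 0) :
    Continuous fun t : ℝ => conjAd U t d := by
  have hF0 : conjAd U 0 a = a := conjAd_zero h a
  have Fcont : Continuous fun t : ℝ => conjAd U t a := by
    apply continuous_conjAd_of_tendsto h
    have := hd.continuousAt
    rwa [ContinuousAt, hF0] at this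
  apply continuous_conjAd_of_tendsto h
  rw [Metric.tendsto_nhds]
  intro ε hε
  have hev : ∀ᶠ s : ℝ in 𝓝 (0:ℝ), ‖conjAd U s a - a - s • d‖ ≤ ε/8 * ‖s‖ := by
    have := (hasDerivAt_iff_isLittleO.mp hd).def (show (0:ℝ) < ε/8 by positivity)
    simpa [hF0] using this
  obtain ⟨s, hs_bound, hs_ne⟩ : ∃ s : ℝ, ‖conjAd U s a - a - s • d‖ ≤ ε/8 * |s| ∧ s ≠ 0 := by
    have h2 : ∀ᶠ s : ℝ in 𝓝[≠] (0:ℝ),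
        ‖conjAd U s a - a - s • d‖ ≤ ε/8 * |s| ∧ s ≠ 0 := by
      refine ((hev.filter_mono nhdsWithin_le_nhds).and eventually_mem_nhdsWithin).mono ?_
      intro s hs
      exact ⟨by simpa [Real.norm_eq_abs] using hs.1, hs.2⟩
    exact h2.exists
  set E : H →L[ℂ] H := conjAd U s a - a - s • d with hE
  have habs : (0:ℝ) < |s| := abs_pos.mpr hs_ne
  have hA : ∀ t : ℝ, conjAd U t E = conjAd U (t + s) a - conjAd U t a - s • conjAd U t d := by
    intro t
    rw [hE, ← conjAdL_apply]
    simp only [map_sub, ContinuousLinearMap.map_smul_of_tower]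
    rw [conjAdL_apply, conjAdL_apply, conjAdL_apply, ← conjAd_add h]
  have key : ∀ t : ℝ, conjAd U t d - d
      = s⁻¹ • ((conjAd U (t + s) a - conjAd U s a) - (conjAd U t a - a)
          - conjAd U t E + E) := by
    intro t
    have halg : (conjAd U (t + s) a - conjAd U s a) - (conjAd U t a - a)
        - (conjAd U (t + s) a - conjAd U t a - s • conjAd U t d)
        + (conjAd U s a - a - s • d) = s • (conjAd U t d - d) := by
      module
    rw [hA t, hE, halg, inv_smul_smul₀ hs_ne]
  have c1 : Tendsto (fun t : ℝ => ‖conjAd U (t + s) a - conjAd U s a‖) (𝓝 0) (𝓝 0) := by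
    have h1 := (Fcont.comp (continuous_add_right s)).tendsto 0
    simp only [Function.comp, zero_add] at h1
    have := (h1.sub_const (conjAd U s a)).norm
    simpa using this
  have c2 : Tendsto (fun t : ℝ => ‖conjAd U t a - a‖) (𝓝 0) (𝓝 0) := by
    have := ((Fcont.tendsto 0).sub_const a).norm
    simpa [hF0] using this
  have e1 : ∀ᶠ t : ℝ in 𝓝 (0:ℝ), ‖conjAd U (t + s) a - conjAd U s a‖ < ε/8 * |s| := by
    refine c1.eventually_lt_const ?_
    positivity
  have e2 : ∀ᶠ t : ℝ in 𝓝 (0:ℝ), ‖conjAd U t a - a‖ < ε/8 * |s| := by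
    refine c2.eventually_lt_const ?_
    positivity
  filter_upwards [e1, e2] with t h1 h2
  rw [dist_eq_norm, key t, norm_smul, Real.norm_eq_abs, abs_inv]
  have hCE : ‖conjAd U t E‖ = ‖E‖ := conjAd_norm h t E
  have tri : ‖(conjAd U (t + s) a - conjAd U s a) - (conjAd U t a - a) - conjAd U t E + E‖
      ≤ ‖conjAd U (t + s) a - conjAd U s a‖ + ‖conjAd U t a - a‖ + ‖conjAd U t E‖ + ‖E‖ := by
    calc ‖(conjAd U (t + s) a - conjAd U s a) - (conjAd U t a - a) - conjAd U t E + E‖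
        ≤ ‖(conjAd U (t + s) a - conjAd U s a) - (conjAd U t a - a) - conjAd U t E‖ + ‖E‖ :=
          norm_add_le _ _
      _ ≤ ‖(conjAd U (t + s) a - conjAd U s a) - (conjAd U t a - a)‖ + ‖conjAd U t E‖ + ‖E‖ := by
          gcongr ?_ + _
          exact norm_sub_le _ _
      _ ≤ ‖conjAd U (t + s) a - conjAd U s a‖ + ‖conjAd U t a - a‖ + ‖conjAd U t E‖ + ‖E‖ := by
          gcongr ?_ + _ + _
          exact norm_sub_le _ _
  have hsum : ‖(conjAd U (t + s) a - conjAd U s a) - (conjAd U t a - a) - conjAd U t E + E‖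
      < ε/2 * |s| := by
    have := tri
    rw [hCE] at this
    linarith
  calc |s|⁻¹ * ‖(conjAd U (t + s) a - conjAd U s a) - (conjAd U t a - a) - conjAd U t E + E‖
      < |s|⁻¹ * (ε/2 * |s|) := by
        exact mul_lt_mul_of_pos_left hsum (inv_pos.mpr habs)
    _ = ε/2 := by field_simp
    _ < ε := by linarith

end StoneHelp

end StoneHelpSec

/-- `a` is strongly `D`-differentiable (i.e. `t ↦ α_t(a)` is norm differentiable at `0`)
iff `a` is weakly `D`-differentiable and `t ↦ α_t(wD(a))` is norm continuous. -/
theorem strong_iff_weak_and_continuous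
    (D : H →ₗ.[ℂ] H) (hD : IsSelfAdjoint D)
    (U : ℝ → H →L[ℂ] H) (hU : IsStoneGroupOf D U)
    (a : H →L[ℂ] H) :
    (∃ d : H →L[ℂ] H, HasDerivAt (fun t : ℝ => conjAd U t a) d 0) ↔
      (∃ b : H →L[ℂ] H, IsWeakDeriv D a b ∧
        Continuous fun t : ℝ => conjAd U t b) := by
  constructor
  · rintro ⟨d, hd⟩
    refine ⟨-(Complex.I • d), StoneHelp.forward_weak hU a d hd, ?_⟩
    have hcont := StoneHelp.forward_cont hU a d hd
    have hrw : (fun t : ℝ => conjAd U t (-(Complex.I • d)))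
        = fun t : ℝ => -(Complex.I • conjAd U t d) := by
      funext t
      rw [← StoneHelp.conjAdL_apply, map_neg, _root_.map_smul, StoneHelp.conjAdL_apply]
    rw [hrw]
    exact (hcont.const_smul Complex.I).neg
  · rintro ⟨b, hb, Cb⟩
    exact ⟨Complex.I • b, StoneHelp.backward hD hU a b hb Cb⟩
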